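/- Let ν be a probability measure on a space X, T: X → X measurable, and define μ_N = (1/N) ∑_{n=0}^{N−1} T^n_* ν. For a measurable set A ⊆ X and its complement B = X \ A, one has μ_N(A) ≤ ν(A) + (1/N) ∑_{i=1}^{N} i · ν({x ∈ B : |{n ∈ [0,N−1] : T^n x ∈ A}| = i}). Moreover, for any κ ∈ [0,1], the second term is at most κ + ν({x ∈ B : |{n ∈ [0,N−1] : T^n x ∈ A}| > κN}). -/

import Mathlib

open MeasureTheory
open scoped ENNReal Classical

theorem stmt_17 {X : Type*} [MeasurableSpace X]
    (ν : Measure X) [IsProbabilityMeasure ν]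
    (T : X → X) (hT : Measurable T)
    (A : Set X) (hA : MeasurableSet A)
    (N : ℕ) (hN : 0 < N) (κ : ℝ) (hκ0 : 0 ≤ κ) (hκ1 : κ ≤ 1) :
    ((N : ℝ≥0∞)⁻¹ * ∑ n ∈ Finset.range N, (Measure.map T^[n] ν) A
        ≤ ν A + (N : ℝ≥0∞)⁻¹ * ∑ i ∈ Finset.Icc 1 N, (i : ℝ≥0∞) *
            ν {x ∈ Aᶜ | ((Finset.range N).filter fun n => T^[n] x ∈ A).card = i}) ∧
      (N : ℝ≥0∞)⁻¹ * ∑ i ∈ Finset.Icc 1 N, (i : ℝ≥0∞) *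
            ν {x ∈ Aᶜ | ((Finset.range N).filter fun n => T^[n] x ∈ A).card = i}
        ≤ ENNReal.ofReal κ +
          ν {x ∈ Aᶜ | κ * N < (((Finset.range N).filter fun n => T^[n] x ∈ A).card : ℝ)} := by
  set f : X → ℕ := fun x => ((Finset.range N).filter fun n => T^[n] x ∈ A).card with hf
  have hTn : ∀ n : ℕ, Measurable (T^[n]) := fun n => hT.iterate n
  have hNne : (N : ℝ≥0∞) ≠ 0 := by exact_mod_cast hN.ne'
  have hNtop : (N : ℝ≥0∞) ≠ ∞ := ENNReal.natCast_ne_top N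
  have hfm : Measurable f := by
    have hfe : f = fun x => ∑ n ∈ Finset.range N, if T^[n] x ∈ A then 1 else 0 := by
      funext x; exact Finset.card_filter _ _
    rw [hfe]
    exact Finset.measurable_sum _ fun n _ =>
      Measurable.ite ((hTn n) hA) measurable_const measurable_const
  have hfle : ∀ x, f x ≤ N := fun x => by
    simpa using Finset.card_filter_le (Finset.range N) (fun n => T^[n] x ∈ A)
  have hEm : ∀ i : ℕ, MeasurableSet {x ∈ Aᶜ | f x = i} := fun i =>
    hA.compl.inter (hfm (measurableSet_singleton i))
  -- disjointness and measure of unions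
  have hdisj : ∀ t : Finset ℕ, (↑t : Set ℕ).PairwiseDisjoint
      (fun i => {x ∈ Aᶜ | f x = i}) := by
    intro t i _ j _ hij
    rw [Function.onFun, Set.disjoint_left]
    rintro x ⟨-, hxi⟩ ⟨-, hxj⟩
    exact hij (hxi ▸ hxj ▸ rfl)
  have hmeas_union : ∀ t : Finset ℕ,
      ∑ i ∈ t, ν {x ∈ Aᶜ | f x = i} = ν (⋃ i ∈ t, {x ∈ Aᶜ | f x = i}) :=
    fun t => (measure_biUnion_finset (hdisj t) fun i _ => hEm i).symm
  -- key: sum over maps = lintegral of f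
  have key1 : ∑ n ∈ Finset.range N, (Measure.map T^[n] ν) A
      = ∫⁻ x, (f x : ℝ≥0∞) ∂ν := by
    have h1 : ∀ n ∈ Finset.range N, (Measure.map T^[n] ν) A
        = ∫⁻ x, Set.indicator (T^[n] ⁻¹' A) 1 x ∂ν := by
      intro n _
      rw [Measure.map_apply (hTn n) hA, lintegral_indicator ((hTn n) hA) _]
      simp
    rw [Finset.sum_congr rfl h1, ← lintegral_finset_sum _
      (fun n _ => measurable_one.indicator ((hTn n) hA))]
    refine lintegral_congr fun x => ?_
    simp only [Set.indicator_apply, Set.mem_preimage, hf, Finset.card_filter]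
    push_cast
    rfl
  -- split the integral
  have hsplit : ∫⁻ x, (f x : ℝ≥0∞) ∂ν
      = (∫⁻ x in A, (f x : ℝ≥0∞) ∂ν) + ∫⁻ x in Aᶜ, (f x : ℝ≥0∞) ∂ν :=
    (lintegral_add_compl _ hA).symm
  have hintA : ∫⁻ x in A, (f x : ℝ≥0∞) ∂ν ≤ (N : ℝ≥0∞) * ν A := by
    calc ∫⁻ x in A, (f x : ℝ≥0∞) ∂ν ≤ ∫⁻ _ in A, (N : ℝ≥0∞) ∂ν :=
          lintegral_mono fun x => by exact Nat.cast_le.mpr (hfle x)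
      _ = (N : ℝ≥0∞) * ν A := by rw [setLIntegral_const]
  have hpt : ∀ x, (f x : ℝ≥0∞) = ∑ i ∈ Finset.Icc 1 N,
      (i : ℝ≥0∞) * Set.indicator {y | f y = i} 1 x := by
    intro x
    rcases Nat.eq_zero_or_pos (f x) with h0 | h0
    · rw [h0, Nat.cast_zero]
      refine (Finset.sum_eq_zero fun i hi => ?_).symm
      have hne : f x ≠ i := by
        have := (Finset.mem_Icc.mp hi).1; omega
      simp [Set.indicator_apply, hne]
    · rw [Finset.sum_eq_single (f x)]
      · simp [Set.indicator_apply]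
      · intro i _ hne
        have : f x ≠ i := fun h => hne h.symm
        simp [Set.indicator_apply, this]
      · intro h
        exact absurd (Finset.mem_Icc.mpr ⟨h0, hfle x⟩) h
  have key2 : ∫⁻ x in Aᶜ, (f x : ℝ≥0∞) ∂ν
      = ∑ i ∈ Finset.Icc 1 N, (i : ℝ≥0∞) * ν {x ∈ Aᶜ | f x = i} := by
    calc ∫⁻ x in Aᶜ, (f x : ℝ≥0∞) ∂ν
        = ∫⁻ x in Aᶜ, ∑ i ∈ Finset.Icc 1 N,
            (i : ℝ≥0∞) * Set.indicator {y | f y = i} 1 x ∂ν :=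
          lintegral_congr fun x => hpt x
      _ = ∑ i ∈ Finset.Icc 1 N, ∫⁻ x in Aᶜ,
            (i : ℝ≥0∞) * Set.indicator {y | f y = i} 1 x ∂ν :=
          lintegral_finset_sum _ fun i _ =>
            (measurable_one.indicator (hfm (measurableSet_singleton i))).const_mul _
      _ = ∑ i ∈ Finset.Icc 1 N, (i : ℝ≥0∞) * ν {x ∈ Aᶜ | f x = i} := by
          refine Finset.sum_congr rfl fun i _ => ?_
          have hMi : MeasurableSet {y | f y = i} := hfm (measurableSet_singleton i)
          rw [lintegral_const_mul _ (measurable_one.indicator hMi),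
            lintegral_indicator hMi _]
          simp only [lintegral_one, Measure.restrict_restrict hMi,
            Measure.restrict_apply_univ]
          have hset : {y | f y = i} ∩ Aᶜ = {x ∈ Aᶜ | f x = i} := by
            ext x; exact ⟨fun ⟨h1, h2⟩ => ⟨h2, h1⟩, fun ⟨h1, h2⟩ => ⟨h2, h1⟩⟩
          rw [hset]
          simp
  constructor
  · -- first inequality
    rw [key1, hsplit, mul_add]
    gcongr
    calc (N : ℝ≥0∞)⁻¹ * ∫⁻ x in A, (f x : ℝ≥0∞) ∂ν
        ≤ (N : ℝ≥0∞)⁻¹ * ((N : ℝ≥0∞) * ν A) := by gcongr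
      _ = ν A := by rw [← mul_assoc, ENNReal.inv_mul_cancel hNne hNtop, one_mul]
    rw [key2]
  · -- second inequality
    set S : Finset ℕ := Finset.Icc 1 N with hS
    set G : Set X := {x ∈ Aᶜ | κ * N < (f x : ℝ)} with hG
    have hsplit2 := Finset.sum_filter_add_sum_filter_not S
      (fun i : ℕ => (i : ℝ) ≤ κ * N) (fun i => (i : ℝ≥0∞) * ν {x ∈ Aᶜ | f x = i})
    rw [← hsplit2, mul_add]
    have hpart1 : (N : ℝ≥0∞)⁻¹ * ∑ i ∈ S.filter (fun i : ℕ => (i : ℝ) ≤ κ * N),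
        (i : ℝ≥0∞) * ν {x ∈ Aᶜ | f x = i} ≤ ENNReal.ofReal κ := by
      have hb : ∀ i ∈ S.filter (fun i : ℕ => (i : ℝ) ≤ κ * N),
          (i : ℝ≥0∞) * ν {x ∈ Aᶜ | f x = i}
            ≤ ENNReal.ofReal κ * (N : ℝ≥0∞) * ν {x ∈ Aᶜ | f x = i} := by
        intro i hi
        have hle : (i : ℝ) ≤ κ * N := (Finset.mem_filter.mp hi).2
        gcongr
        calc (i : ℝ≥0∞) = ENNReal.ofReal (i : ℝ) := by
              rw [ENNReal.ofReal_natCast]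
          _ ≤ ENNReal.ofReal (κ * N) := ENNReal.ofReal_le_ofReal hle
          _ = ENNReal.ofReal κ * (N : ℝ≥0∞) := by
              rw [ENNReal.ofReal_mul hκ0, ENNReal.ofReal_natCast]
      calc (N : ℝ≥0∞)⁻¹ * ∑ i ∈ S.filter (fun i : ℕ => (i : ℝ) ≤ κ * N),
            (i : ℝ≥0∞) * ν {x ∈ Aᶜ | f x = i}
          ≤ (N : ℝ≥0∞)⁻¹ * ∑ i ∈ S.filter (fun i : ℕ => (i : ℝ) ≤ κ * N),
            ENNReal.ofReal κ * (N : ℝ≥0∞) * ν {x ∈ Aᶜ | f x = i} :=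
            mul_le_mul_right (Finset.sum_le_sum hb) _
        _ = (N : ℝ≥0∞)⁻¹ * ((N : ℝ≥0∞) * (ENNReal.ofReal κ *
              ∑ i ∈ S.filter (fun i : ℕ => (i : ℝ) ≤ κ * N), ν {x ∈ Aᶜ | f x = i})) := by
            rw [← Finset.mul_sum]; ring
        _ = ENNReal.ofReal κ *
              ∑ i ∈ S.filter (fun i : ℕ => (i : ℝ) ≤ κ * N), ν {x ∈ Aᶜ | f x = i} := by
            rw [← mul_assoc, ENNReal.inv_mul_cancel hNne hNtop, one_mul]
        _ ≤ ENNReal.ofReal κ * 1 := by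
            gcongr
            rw [hmeas_union]
            exact prob_le_one
        _ = ENNReal.ofReal κ := mul_one _
    have hpart2 : (N : ℝ≥0∞)⁻¹ * ∑ i ∈ S.filter (fun i : ℕ => ¬ (i : ℝ) ≤ κ * N),
        (i : ℝ≥0∞) * ν {x ∈ Aᶜ | f x = i} ≤ ν G := by
      have hb : ∀ i ∈ S.filter (fun i : ℕ => ¬ (i : ℝ) ≤ κ * N),
          (i : ℝ≥0∞) * ν {x ∈ Aᶜ | f x = i}
            ≤ (N : ℝ≥0∞) * ν {x ∈ Aᶜ | f x = i} := by
        intro i hi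
        have hiN : i ≤ N := (Finset.mem_Icc.mp (Finset.mem_filter.mp hi).1).2
        have : (i : ℝ≥0∞) ≤ (N : ℝ≥0∞) := by exact_mod_cast hiN
        exact mul_le_mul_left this _
      calc (N : ℝ≥0∞)⁻¹ * ∑ i ∈ S.filter (fun i : ℕ => ¬ (i : ℝ) ≤ κ * N),
            (i : ℝ≥0∞) * ν {x ∈ Aᶜ | f x = i}
          ≤ (N : ℝ≥0∞)⁻¹ * ∑ i ∈ S.filter (fun i : ℕ => ¬ (i : ℝ) ≤ κ * N),
            (N : ℝ≥0∞) * ν {x ∈ Aᶜ | f x = i} :=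
            mul_le_mul_right (Finset.sum_le_sum hb) _
        _ = ∑ i ∈ S.filter (fun i : ℕ => ¬ (i : ℝ) ≤ κ * N), ν {x ∈ Aᶜ | f x = i} := by
            rw [← Finset.mul_sum, ← mul_assoc, ENNReal.inv_mul_cancel hNne hNtop, one_mul]
        _ = ν (⋃ i ∈ S.filter (fun i : ℕ => ¬ (i : ℝ) ≤ κ * N), {x ∈ Aᶜ | f x = i}) :=
            hmeas_union _
        _ ≤ ν G := by
            refine measure_mono ?_
            intro x hx
            simp only [Set.mem_iUnion] at hx
            obtain ⟨i, hi, hxA, hfx⟩ := hx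
            have hgt : κ * N < (i : ℝ) := lt_of_not_ge (Finset.mem_filter.mp hi).2
            exact ⟨hxA, hfx ▸ hgt⟩
    exact add_le_add hpart1 hpart2
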